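/- arXiv:2209.07645 — 3 statements merged into one kernel-verified Lean document; each statement's English description precedes it below -/
import Mathlib

section
/- Under these assumptions, the Hessian matrix W₂ of E at 0 is symmetric and satisfies the H∞ algebraic Riccati equation Aᵀ W₂ + W₂ A + Cᵀ C − η · W₂ B Bᵀ W₂ = 0. (Quadratic-coefficient part of Theorem 6.) -/
open Matrix Filter Topology
open scoped RealInnerProductSpace

set_option maxHeartbeats 1000000

noncomputable section

/-- Reinterpret a plain vector in `Fin n → ℝ` as an element of Euclidean space. -/
def toEuc {n : ℕ} (v : Fin n → ℝ) : EuclideanSpace ℝ (Fin n) := WithLp.toLp 2 v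

private lemma toEuc_mulVec_smul {q n : ℕ} (M : Matrix (Fin q) (Fin n) ℝ) (t : ℝ)
    (u : EuclideanSpace ℝ (Fin n)) :
    toEuc (M.mulVec ((t • u : EuclideanSpace ℝ (Fin n)))) = t • toEuc (M.mulVec u) := by
  ext i
  simp [toEuc, Matrix.mulVec, dotProduct, Finset.mul_sum]
  exact Finset.sum_congr rfl fun j _ => by ring

private lemma toEuc_mulVec_add {q n : ℕ} (M : Matrix (Fin q) (Fin n) ℝ)
    (u v : EuclideanSpace ℝ (Fin n)) :
    toEuc (M.mulVec ((u + v : EuclideanSpace ℝ (Fin n)))) = toEuc (M.mulVec u) + toEuc (M.mulVec v) := by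
  ext i
  simp [toEuc, Matrix.mulVec, dotProduct, Finset.sum_add_distrib, mul_add]

private lemma toEuc_mulVec_single {q n : ℕ} (M : Matrix (Fin q) (Fin n) ℝ) (i : Fin n) :
    toEuc (M.mulVec (EuclideanSpace.single i 1)) = toEuc (fun k => M k i) := by
  ext k
  simp [toEuc, Matrix.mulVec, dotProduct, EuclideanSpace.single_apply]

private lemma inner_toEuc {n : ℕ} (u v : Fin n → ℝ) :
    ⟪toEuc u, toEuc v⟫ = ∑ i, u i * v i := by
  simp [toEuc, PiLp.inner_apply, RCLike.inner_apply]
  exact Finset.sum_congr rfl fun i _ => mul_comm _ _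

/-- Quadratic-coefficient part of Theorem 6: the Hessian `W₂` of a solution `E`
of the future H∞ HJB equation is symmetric and solves the H∞ algebraic Riccati
equation `AᵀW₂ + W₂A + CᵀC - η W₂BBᵀW₂ = 0`. -/
theorem future_energy_quadratic_coefficient
    {n m p : ℕ}
    (A : Matrix (Fin n) (Fin n) ℝ) (B : Matrix (Fin n) (Fin m) ℝ)
    (C : Matrix (Fin p) (Fin n) ℝ)
    (N : EuclideanSpace ℝ (Fin n) →L[ℝ] EuclideanSpace ℝ (Fin n) →L[ℝ] EuclideanSpace ℝ (Fin n))
    (η : ℝ)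
    (E : EuclideanSpace ℝ (Fin n) → ℝ)
    (hE : AnalyticAt ℝ E 0)
    (hE0 : E 0 = 0)
    (hdE : fderiv ℝ E 0 = 0)
    (hHJB : ∀ᶠ x in nhds (0 : EuclideanSpace ℝ (Fin n)),
      ⟪gradient E x, toEuc (A.mulVec x) + N x x⟫
        - (η / 2) * ‖toEuc (Bᵀ.mulVec (gradient E x : EuclideanSpace ℝ (Fin n)))‖ ^ 2
        + (1 / 2) * ‖toEuc (C.mulVec x)‖ ^ 2 = 0)
    (W₂ : Matrix (Fin n) (Fin n) ℝ)
    (hW₂ : ∀ i j, W₂ i j =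
      iteratedFDeriv ℝ 2 E 0 ![EuclideanSpace.single i 1, EuclideanSpace.single j 1]) :
    W₂ᵀ = W₂ ∧ Aᵀ * W₂ + W₂ * A + Cᵀ * C - η • (W₂ * B * Bᵀ * W₂) = 0 := by
  have hC : ContDiffAt ℝ 2 E 0 := hE.contDiffAt
  have hd1 : DifferentiableAt ℝ (fderiv ℝ E) 0 :=
    (hC.fderiv_right (m := 1) (by norm_num)).differentiableAt one_ne_zero
  have hD : HasFDerivAt (fderiv ℝ E) (fderiv ℝ (fderiv ℝ E) 0) 0 := hd1.hasFDerivAt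
  set D := fderiv ℝ (fderiv ℝ E) 0 with hDdef
  have hsymm : ∀ v w, D v w = D w v := hC.isSymmSndFDerivAt (by simp [minSmoothness_of_isRCLikeNormedField])
  -- the Hessian as a continuous linear map on Euclidean space
  set Hlin : EuclideanSpace ℝ (Fin n) →ₗ[ℝ] EuclideanSpace ℝ (Fin n) :=
    { toFun := fun v => toEuc (fun k => D v (EuclideanSpace.single k 1)),
      map_add' := by intro a b; ext k; simp [toEuc]
      map_smul' := by intro c a; ext k; simp [toEuc] } with hHlin
  set H := Hlin.toContinuousLinearMap with hH
  have hHapp : ∀ v k, H v k = D v (EuclideanSpace.single k 1) := fun v k => rfl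
  have hcoord : ∀ (u : EuclideanSpace ℝ (Fin n)) (k : Fin n),
      u k = ⟪u, EuclideanSpace.single k 1⟫ := by
    intro u k; simp [EuclideanSpace.inner_single_right]
  have hsymmEq : ∀ ℓ : EuclideanSpace ℝ (Fin n) →L[ℝ] ℝ,
      (InnerProductSpace.toDual ℝ (EuclideanSpace ℝ (Fin n))).symm ℓ
        = toEuc (fun k => ℓ (EuclideanSpace.single k 1)) := by
    intro ℓ; ext k
    exact (hcoord _ k).trans InnerProductSpace.toDual_symm_apply
  have key : ∀ z y, ‖gradient E z - gradient E 0 - H y‖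
      = ‖fderiv ℝ E z - fderiv ℝ E 0 - D y‖ := by
    intro z y
    have : gradient E z - gradient E 0 - H y
        = (InnerProductSpace.toDual ℝ (EuclideanSpace ℝ (Fin n))).symm
            (fderiv ℝ E z - fderiv ℝ E 0 - D y) := by
      rw [map_sub, map_sub, hsymmEq (D y)]
      rfl
    rw [this, LinearIsometryEquiv.norm_map]
  have hgrad : HasFDerivAt (gradient E) H 0 := by
    rw [hasFDerivAt_iff_isLittleO_nhds_zero]
    have h1 := hasFDerivAt_iff_isLittleO_nhds_zero.mp hD
    rw [← Asymptotics.isLittleO_norm_left] at h1 ⊢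
    have : (fun h => ‖gradient E (0 + h) - gradient E 0 - H h‖)
        = fun h => ‖fderiv ℝ E (0 + h) - fderiv ℝ E 0 - D h‖ := funext fun y => key (0 + y) y
    rw [this]; exact h1
  have hg0 : gradient E 0 = 0 := by
    rw [show gradient E 0 = (InnerProductSpace.toDual ℝ
      (EuclideanSpace ℝ (Fin n))).symm (fderiv ℝ E 0) from rfl, hdE, map_zero]
  -- continuous linear map for Bᵀ
  set LB := LinearMap.toContinuousLinearMap (Matrix.toEuclideanLin Bᵀ) with hLB
  have hLBapp : ∀ v : EuclideanSpace ℝ (Fin n), LB v = toEuc (Bᵀ.mulVec v) := fun v => rfl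
  -- quadratic identity
  have hQ : ∀ x : EuclideanSpace ℝ (Fin n),
      ⟪H x, toEuc (A.mulVec x)⟫ - (η / 2) * ‖toEuc (Bᵀ.mulVec (H x))‖ ^ 2
        + (1 / 2) * ‖toEuc (C.mulVec x)‖ ^ 2 = 0 := by
    intro x
    set s : ℝ → EuclideanSpace ℝ (Fin n) := fun t => t⁻¹ • gradient E (t • x) with hs
    have hline : HasDerivAt (fun t : ℝ => gradient E (t • x)) (H x) 0 := by
      have hsm : HasDerivAt (fun t : ℝ => t • x) x 0 := by
        simpa using (hasDerivAt_id (0 : ℝ)).smul_const x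
      have hgrad' : HasFDerivAt (gradient E) H ((0 : ℝ) • x) := by simpa using hgrad
      exact hgrad'.comp_hasDerivAt 0 hsm
    have hslope : Tendsto s (𝓝[≠] (0 : ℝ)) (𝓝 (H x)) := by
      have h1 := hasDerivAt_iff_tendsto_slope.mp hline
      have h2 : slope (fun t : ℝ => gradient E (t • x)) 0 = s := by
        funext t
        simp [slope, hs, hg0, sub_zero]
      rwa [h2] at h1
    set f : ℝ → ℝ := fun t => ⟪s t, toEuc (A.mulVec x)⟫ + t * ⟪s t, N x x⟫
        - (η / 2) * ‖toEuc (Bᵀ.mulVec (s t))‖ ^ 2 + (1 / 2) * ‖toEuc (C.mulVec x)‖ ^ 2 with hf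
    have hBt : Tendsto (fun t => toEuc (Bᵀ.mulVec (s t))) (𝓝[≠] (0 : ℝ))
        (𝓝 (toEuc (Bᵀ.mulVec (H x)))) := by
      have := (LB.continuous.tendsto (H x)).comp hslope
      exact this
    have ht0 : Tendsto (fun t : ℝ => t) (𝓝[≠] (0 : ℝ)) (𝓝 0) :=
      tendsto_id.mono_left nhdsWithin_le_nhds
    have haN : Tendsto f (𝓝[≠] (0 : ℝ))
        (𝓝 (⟪H x, toEuc (A.mulVec x)⟫ + 0 * ⟪H x, N x x⟫
          - (η / 2) * ‖toEuc (Bᵀ.mulVec (H x))‖ ^ 2 + (1 / 2) * ‖toEuc (C.mulVec x)‖ ^ 2)) := by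
      exact (((hslope.inner tendsto_const_nhds).add
        (ht0.mul (hslope.inner tendsto_const_nhds))).sub
        ((hBt.norm.pow 2).const_mul _)).add tendsto_const_nhds
    have hmap : Tendsto (fun t : ℝ => t • x) (𝓝 (0 : ℝ)) (𝓝 0) := by
      have hcont : Continuous fun t : ℝ => t • x := continuous_id.smul continuous_const
      simpa using hcont.tendsto 0
    have hev : ∀ᶠ t in 𝓝[≠] (0 : ℝ), f t = 0 := by
      filter_upwards [(hmap.eventually hHJB).filter_mono nhdsWithin_le_nhds,
        self_mem_nhdsWithin] with t hP ht
      replace ht : t ≠ 0 := ht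
      have hgs : gradient E (t • x) = t • s t := (smul_inv_smul₀ ht _).symm
      rw [hgs, toEuc_mulVec_smul A t x, toEuc_mulVec_smul C t x,
        toEuc_mulVec_smul Bᵀ t (s t)] at hP
      have hN : N (t • x) (t • x) = (t * t) • N x x := by
        simp [_root_.map_smul, ContinuousLinearMap.smul_apply, smul_smul]
      rw [hN] at hP
      simp only [inner_add_right, real_inner_smul_left, real_inner_smul_right,
        norm_smul, mul_pow, sq_abs, Real.norm_eq_abs] at hP
      apply mul_left_cancel₀ (show (t * t : ℝ) ≠ 0 from mul_ne_zero ht ht)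
      rw [mul_zero, hf]
      linear_combination hP
    have h0 : Tendsto f (𝓝[≠] (0 : ℝ)) (𝓝 0) :=
      Tendsto.congr' (EventuallyEq.symm hev) tendsto_const_nhds
    have := tendsto_nhds_unique haN h0
    linarith [this]
  -- polarization
  have hcross : ∀ x y : EuclideanSpace ℝ (Fin n),
      ⟪H x, toEuc (A.mulVec y)⟫ + ⟪H y, toEuc (A.mulVec x)⟫
        - η * ⟪toEuc (Bᵀ.mulVec (H x)), toEuc (Bᵀ.mulVec (H y))⟫
        + ⟪toEuc (C.mulVec x), toEuc (C.mulVec y)⟫ = 0 := by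
    intro x y
    have h1 := hQ (x + y)
    have h2 := hQ x
    have h3 := hQ y
    rw [map_add, toEuc_mulVec_add A, toEuc_mulVec_add C, toEuc_mulVec_add Bᵀ,
      norm_add_sq_real, norm_add_sq_real, inner_add_left, inner_add_right,
      inner_add_right] at h1
    linear_combination h1 - h2 - h3
  -- identify H on basis vectors with rows of W₂
  have hW2D : ∀ i j, W₂ i j = D (EuclideanSpace.single i 1) (EuclideanSpace.single j 1) := by
    intro i j
    rw [hW₂ i j, iteratedFDeriv_two_apply]
    simp
    rfl
  have hWsymm : W₂ᵀ = W₂ := by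
    ext i j
    rw [transpose_apply, hW2D j i, hW2D i j, hsymm]
  have hsym' : ∀ a b, W₂ a b = W₂ b a := by
    intro a b
    rw [hW2D, hW2D, hsymm]
  have hHe : ∀ i, H (EuclideanSpace.single i 1) = toEuc (W₂ i) := by
    intro i; ext k
    rw [hHapp]
    exact (hW2D i k).symm
  refine ⟨hWsymm, ?_⟩
  ext i j
  have h := hcross (EuclideanSpace.single i 1) (EuclideanSpace.single j 1)
  rw [hHe i, hHe j, toEuc_mulVec_single A j, toEuc_mulVec_single A i,
    toEuc_mulVec_single C i, toEuc_mulVec_single C j] at h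
  have S1 : ⟪toEuc (W₂ i), toEuc (fun k => A k j)⟫ = (W₂ * A) i j := by
    rw [inner_toEuc, Matrix.mul_apply]
  have S2 : ⟪toEuc (W₂ j), toEuc (fun k => A k i)⟫ = (Aᵀ * W₂) i j := by
    rw [inner_toEuc, Matrix.mul_apply]
    refine Finset.sum_congr rfl fun k _ => ?_
    rw [transpose_apply, hsym' j k]
    ring
  have S4 : ⟪toEuc (C · i), toEuc (C · j)⟫ = (Cᵀ * C) i j := by
    rw [inner_toEuc, Matrix.mul_apply]
    refine Finset.sum_congr rfl fun k _ => ?_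
    rw [transpose_apply]
  have S3 : ⟪toEuc (Bᵀ.mulVec (toEuc (W₂ i))), toEuc (Bᵀ.mulVec (toEuc (W₂ j)))⟫
      = (W₂ * B * Bᵀ * W₂) i j := by
    rw [inner_toEuc, Matrix.mul_assoc (W₂ * B), Matrix.mul_apply]
    refine Finset.sum_congr rfl fun l _ => ?_
    simp only [Matrix.mulVec, dotProduct, Matrix.mul_apply, Matrix.transpose_apply, toEuc]
    congr 1
    · exact Finset.sum_congr rfl fun k _ => mul_comm _ _
    · exact Finset.sum_congr rfl fun k _ => by rw [hsym' j k]
  rw [S1, S2, S3, S4] at h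
  simp only [Matrix.add_apply, Matrix.sub_apply, Matrix.smul_apply, smul_eq_mul,
    Matrix.zero_apply]
  linarith [h]
end
end

section
/- Under these assumptions, the cubic Taylor coefficient of E satisfies, for every x ∈ ℝⁿ, the identity 3 · T₃((A − η·B Bᵀ W₂) x, x, x) + ⟪N(x,x), W₂ x⟫ = 0, where W₂ is the Hessian of E at 0 (which solves the H∞ Riccati equation). (Cubic-coefficient part of Theorem 6, equation (72) of the paper.) -/
open Matrix
open scoped RealInnerProductSpace

noncomputable section

section Aux
variable {n : ℕ}

private lemma line_hasDerivAt {W : Type*} [NormedAddCommGroup W] [NormedSpace ℝ W]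
    {F : EuclideanSpace ℝ (Fin n) → W} (x : EuclideanSpace ℝ (Fin n)) {t : ℝ}
    (hF : DifferentiableAt ℝ F (t • x)) :
    HasDerivAt (fun s : ℝ => F (s • x)) (fderiv ℝ F (t • x) x) t := by
  have hc : HasDerivAt (fun s : ℝ => s • x) x t := by
    simpa using (hasDerivAt_id t).smul_const x
  exact (hF.hasFDerivAt.comp_hasDerivAt t hc)

private lemma line_clm_hasDerivAt {W : Type*} [NormedAddCommGroup W] [NormedSpace ℝ W]
    {F : EuclideanSpace ℝ (Fin n) → W} (x : EuclideanSpace ℝ (Fin n)) {t : ℝ}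
    (hF : DifferentiableAt ℝ F (t • x)) (φ : W →L[ℝ] ℝ) :
    HasDerivAt (fun s : ℝ => φ (F (s • x))) (φ (fderiv ℝ F (t • x) x)) t :=
  (φ.hasFDerivAt.comp_hasDerivAt t (line_hasDerivAt x hF))

private lemma euc_norm_sq (v : EuclideanSpace ℝ (Fin n)) : ‖v‖ ^ 2 = ∑ i, v i ^ 2 := by
  rw [EuclideanSpace.norm_eq, Real.sq_sqrt (by positivity)]
  simp [Real.norm_eq_abs, sq_abs]

private lemma euc_eq_sum_single (v : EuclideanSpace ℝ (Fin n)) :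
    v = ∑ j, v j • EuclideanSpace.single j (1 : ℝ) := by
  have h := (EuclideanSpace.basisFun (Fin n) ℝ).sum_repr v
  simpa [EuclideanSpace.basisFun_repr, EuclideanSpace.basisFun_apply] using h.symm

private lemma clm_expand (ψ : EuclideanSpace ℝ (Fin n) →L[ℝ] ℝ) (v : EuclideanSpace ℝ (Fin n)) :
    ψ v = ∑ j, v j * ψ (EuclideanSpace.single j 1) := by
  conv_lhs => rw [euc_eq_sum_single v]
  rw [map_sum]
  simp [smul_eq_mul]

private lemma grad_inner {E : EuclideanSpace ℝ (Fin n) → ℝ} (z v : EuclideanSpace ℝ (Fin n)) :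
    ⟪gradient E z, v⟫ = fderiv ℝ E z v := by
  rw [gradient]
  exact InnerProductSpace.toDual_symm_apply

end Aux

set_option maxHeartbeats 4000000 in
set_option synthInstance.maxHeartbeats 400000 in
/-- Cubic-coefficient part of Theorem 6 (equation (72)): the cubic Taylor
coefficient `T₃ = (1/3!) iteratedFDeriv ℝ 3 E 0` of a solution `E` of the future
H∞ HJB equation satisfies `3 T₃((A - η B Bᵀ W₂) x, x, x) + ⟪N(x,x), W₂ x⟫ = 0`
for all `x`, where `W₂` is the Hessian of `E` at `0`. -/
theorem future_energy_cubic_coefficient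
    {n m p : ℕ}
    (A : Matrix (Fin n) (Fin n) ℝ) (B : Matrix (Fin n) (Fin m) ℝ)
    (C : Matrix (Fin p) (Fin n) ℝ)
    (N : EuclideanSpace ℝ (Fin n) →L[ℝ] EuclideanSpace ℝ (Fin n) →L[ℝ] EuclideanSpace ℝ (Fin n))
    (η : ℝ)
    (E : EuclideanSpace ℝ (Fin n) → ℝ)
    (hE : AnalyticAt ℝ E 0)
    (hE0 : E 0 = 0)
    (hdE : fderiv ℝ E 0 = 0)
    (hHJB : ∀ᶠ x in nhds (0 : EuclideanSpace ℝ (Fin n)),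
      ⟪gradient E x, toEuc (A.mulVec x) + N x x⟫
        - (η / 2) * ‖toEuc (Bᵀ.mulVec (gradient E x : EuclideanSpace ℝ (Fin n)))‖ ^ 2
        + (1 / 2) * ‖toEuc (C.mulVec x)‖ ^ 2 = 0)
    (W₂ : Matrix (Fin n) (Fin n) ℝ)
    (hW₂ : ∀ i j, W₂ i j =
      iteratedFDeriv ℝ 2 E 0 ![EuclideanSpace.single i 1, EuclideanSpace.single j 1]) :
    ∀ x : EuclideanSpace ℝ (Fin n),
      3 * ((Nat.factorial 3 : ℝ)⁻¹ • iteratedFDeriv ℝ 3 E 0)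
          ![toEuc ((A - η • (B * Bᵀ * W₂)).mulVec x), x, x]
        + ⟪N x x, toEuc (W₂.mulVec x)⟫ = 0 := by
  intro x
  obtain ⟨s, hsmem, hsan⟩ := hE.exists_mem_nhds_analyticOnNhd
  obtain ⟨U, hUs, hUopen, hU0⟩ := mem_nhds_iff.mp hsmem
  have hEU : AnalyticOnNhd ℝ E U := hsan.mono hUs
  set G1 :=
    fderiv ℝ E with hG1def
  set G2 := fderiv ℝ G1 with hG2def
  letI i3 : NormedAddCommGroup (EuclideanSpace ℝ (Fin n) →L[ℝ] EuclideanSpace ℝ (Fin n) →L[ℝ]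
      EuclideanSpace ℝ (Fin n) →L[ℝ] ℝ) :=
    ContinuousLinearMap.toNormedAddCommGroup (𝕜 := ℝ) (𝕜₂ := ℝ) (σ₁₂ := RingHom.id ℝ)
      (E := EuclideanSpace ℝ (Fin n))
      (F := EuclideanSpace ℝ (Fin n) →L[ℝ] EuclideanSpace ℝ (Fin n) →L[ℝ] ℝ)
  letI i4 : NormedSpace ℝ (EuclideanSpace ℝ (Fin n) →L[ℝ] EuclideanSpace ℝ (Fin n) →L[ℝ]
      EuclideanSpace ℝ (Fin n) →L[ℝ] ℝ) :=
    ContinuousLinearMap.toNormedSpace (𝕜 := ℝ) (𝕜₂ := ℝ) (σ₁₂ := RingHom.id ℝ)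
      (E := EuclideanSpace ℝ (Fin n))
      (F := EuclideanSpace ℝ (Fin n) →L[ℝ] EuclideanSpace ℝ (Fin n) →L[ℝ] ℝ)
  set G3 := fderiv ℝ G2 with hG3def
  set G4 := fderiv ℝ G3 with hG4def
  have hG1an : AnalyticOnNhd ℝ G1 U := hEU.fderiv
  have hG2an : AnalyticOnNhd ℝ G2 U := hG1an.fderiv
  have hG3an : AnalyticOnNhd ℝ G3 U := hG2an.fderiv
  have hfd0 : ∀ z ∈ U, HasFDerivAt E (G1 z) z :=
    fun z hz => ((hEU z hz).differentiableAt).hasFDerivAt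
  have hfd1 : ∀ z ∈ U, HasFDerivAt G1 (G2 z) z :=
    fun z hz => ((hG1an z hz).differentiableAt).hasFDerivAt
  have hfd2 : ∀ z ∈ U, HasFDerivAt G2 (G3 z) z :=
    fun z hz => ((hG2an z hz).differentiableAt).hasFDerivAt
  -- the line t ↦ t • x
  set V : Set ℝ := (fun t : ℝ => t • x) ⁻¹' U with hVdef
  have hVopen : IsOpen V := hUopen.preimage (continuous_id.smul continuous_const)
  have h0x : (0 : ℝ) • x = 0 := zero_smul ℝ x
  have hV0 : (0 : ℝ) ∈ V := by simp only [hVdef, Set.mem_preimage, h0x]; exact hU0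
  have hVmem : V ∈ nhds (0 : ℝ) := hVopen.mem_nhds hV0
  have hVU : ∀ t ∈ V, t • x ∈ U := fun t ht => ht
  -- directional derivative functions along the line
  set D : EuclideanSpace ℝ (Fin n) → ℝ → ℝ := fun y t => G1 (t • x) y with hDdef
  set D1 : EuclideanSpace ℝ (Fin n) → ℝ → ℝ := fun y t => G2 (t • x) x y with hD1def
  set D2 : EuclideanSpace ℝ (Fin n) → ℝ → ℝ := fun y t => G3 (t • x) x x y with hD2def
  set D3 : EuclideanSpace ℝ (Fin n) → ℝ → ℝ := fun y t => G4 (t • x) x x x y with hD3def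
  have hDd : ∀ y, ∀ t ∈ V, HasDerivAt (D y) (D1 y t) t := by
    intro y t ht
    exact line_clm_hasDerivAt (F := G1) x ((hG1an _ (hVU t ht)).differentiableAt)
      (ContinuousLinearMap.apply ℝ ℝ y)
  have hD1d : ∀ y, ∀ t ∈ V, HasDerivAt (D1 y) (D2 y t) t := by
    intro y t ht
    exact line_clm_hasDerivAt (F := G2) x ((hG2an _ (hVU t ht)).differentiableAt)
      ((ContinuousLinearMap.apply ℝ ℝ y).comp
        (ContinuousLinearMap.apply ℝ (EuclideanSpace ℝ (Fin n) →L[ℝ] ℝ) x))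
  have hD2d : ∀ y, ∀ t ∈ V, HasDerivAt (D2 y) (D3 y t) t := by
    intro y t ht
    exact line_clm_hasDerivAt (F := G3) x ((hG3an _ (hVU t ht)).differentiableAt)
      (((ContinuousLinearMap.apply ℝ ℝ y).comp
        (ContinuousLinearMap.apply ℝ (EuclideanSpace ℝ (Fin n) →L[ℝ] ℝ) x)).comp
        (ContinuousLinearMap.apply ℝ
          (EuclideanSpace ℝ (Fin n) →L[ℝ] EuclideanSpace ℝ (Fin n) →L[ℝ] ℝ) x))
  have hD0 : ∀ y, D y 0 = 0 := by
    intro y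
    simp only [hDdef, h0x, hdE]
    rfl
  have hD1v : ∀ y, D1 y 0 = G2 0 x y := by intro y; simp only [hD1def, h0x]
  have hD2v : ∀ y, D2 y 0 = G3 0 x x y := by intro y; simp only [hD2def, h0x]
  -- pull back the HJB equation along the line
  have hcurve : Filter.Tendsto (fun t : ℝ => t • x) (nhds 0) (nhds 0) := by
    have hc : Continuous fun t : ℝ => t • x := continuous_id.smul continuous_const
    have := hc.tendsto 0
    rwa [h0x] at this
  have hHJBt := hcurve.eventually hHJB
  set bv : Fin m → EuclideanSpace ℝ (Fin n) := fun i => toEuc (fun j => B j i) with hbvdef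
  set yu : EuclideanSpace ℝ (Fin n) := toEuc (A.mulVec x) with hyudef
  set yv : EuclideanSpace ℝ (Fin n) := N x x with hyvdef
  set c0 : ℝ := ‖toEuc (C.mulVec x)‖ ^ 2 with hc0def
  -- the pulled-back HJB identity
  have hL0 : (fun t : ℝ => t * D yu t + t ^ 2 * D yv t
      - (η / 2) * (∑ i, (D (bv i) t) ^ 2) + (1 / 2) * c0 * t ^ 2)
      =ᶠ[nhds (0 : ℝ)] (fun _ => (0 : ℝ)) := by
    filter_upwards [hHJBt] with t hP
    have hzero : ∀ v : EuclideanSpace ℝ (Fin n),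
        (⟪gradient E (t • x), v⟫ : ℝ) = G1 (t • x) v := fun v => grad_inner _ _
    have e1 : (⟪gradient E (t • x), toEuc (A.mulVec (t • x)) + N (t • x) (t • x)⟫ : ℝ)
        = t * D yu t + t ^ 2 * D yv t := by
      have hA : toEuc (A.mulVec (t • x)) = t • yu := by
        show toEuc (A.mulVec (t • (x : Fin n → ℝ))) = t • yu
        rw [Matrix.mulVec_smul]
        rfl
      have hN : N (t • x) (t • x) = (t * t) • yv := by
        have h1 : N (t • x) = t • N x := _root_.map_smul N t x
        rw [h1, ContinuousLinearMap.smul_apply, _root_.map_smul, smul_smul, hyvdef]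
      rw [hA, hN, inner_add_right, real_inner_smul_right, real_inner_smul_right,
        hzero, hzero]
      simp only [hDdef]
      ring
    have e2 : ‖toEuc (Bᵀ.mulVec (gradient E (t • x) : EuclideanSpace ℝ (Fin n)))‖ ^ 2
        = ∑ i, (D (bv i) t) ^ 2 := by
      rw [euc_norm_sq]
      refine Finset.sum_congr rfl fun i _ => ?_
      congr 1
      have h1 : (toEuc (Bᵀ.mulVec (gradient E (t • x) : EuclideanSpace ℝ (Fin n)))) i
          = ∑ j, B j i * (gradient E (t • x)) j := by
        simp [toEuc, Matrix.mulVec, dotProduct, Matrix.transpose_apply]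
      have h2 : D (bv i) t = ∑ j, (gradient E (t • x)) j * B j i := by
        rw [hDdef]
        simp only
        rw [← hzero (bv i), PiLp.inner_apply]
        simp [RCLike.inner_apply, hbvdef, toEuc]
        exact Finset.sum_congr rfl fun j _ => mul_comm _ _
      rw [h1, h2]
      exact Finset.sum_congr rfl fun j _ => mul_comm _ _
    have e3 : ‖toEuc (C.mulVec (t • x))‖ ^ 2 = t ^ 2 * c0 := by
      have hC : toEuc (C.mulVec (t • x)) = t • toEuc (C.mulVec x) := by
        show toEuc (C.mulVec (t • (x : Fin n → ℝ))) = t • toEuc (C.mulVec x)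
        rw [Matrix.mulVec_smul]
        rfl
      rw [hC, norm_smul, mul_pow, hc0def]
      simp [sq_abs]
    have : t * D yu t + t ^ 2 * D yv t - (η / 2) * (∑ i, (D (bv i) t) ^ 2)
        + (1 / 2) * c0 * t ^ 2
        = ⟪gradient E (t • x), toEuc (A.mulVec (t • x)) + N (t • x) (t • x)⟫
          - (η / 2) * ‖toEuc (Bᵀ.mulVec (gradient E (t • x) : EuclideanSpace ℝ (Fin n)))‖ ^ 2
          + (1 / 2) * ‖toEuc (C.mulVec (t • x))‖ ^ 2 := by
      rw [e1, e2, e3]; ring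
    exact this.trans hP
  -- first derivative
  have hL1 : ∀ t ∈ V, HasDerivAt
      (fun t : ℝ => t * D yu t + t ^ 2 * D yv t
        - (η / 2) * (∑ i, (D (bv i) t) ^ 2) + (1 / 2) * c0 * t ^ 2)
      (D yu t + t * D1 yu t + 2 * t * D yv t + t ^ 2 * D1 yv t
        - (η / 2) * (∑ i, 2 * D (bv i) t * D1 (bv i) t) + c0 * t) t := by
    intro t ht
    have k1 := (hasDerivAt_id t).fun_mul (hDd yu t ht)
    have k2 := (hasDerivAt_pow 2 t).fun_mul (hDd yv t ht)
    have k3 : HasDerivAt (fun y : ℝ => ∑ i, (D (bv i) y) ^ 2)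
        (∑ i, 2 * D (bv i) t * D1 (bv i) t) t := by
      have h := HasDerivAt.fun_sum (fun (i : Fin m) (_ : i ∈ Finset.univ) => (hDd (bv i) t ht).fun_pow 2)
      exact h.congr_deriv (Finset.sum_congr rfl fun i _ => by push_cast; ring)
    have k4 := k3.const_mul (η / 2)
    have k5 := (hasDerivAt_pow 2 t).const_mul ((1 / 2) * c0)
    have H := ((k1.fun_add k2).fun_sub k4).fun_add k5
    refine H.congr_deriv ?_
    simp only [id_eq]
    push_cast
    ring
  -- second derivative
  have hL2 : ∀ t ∈ V, HasDerivAt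
      (fun t : ℝ => D yu t + t * D1 yu t + 2 * t * D yv t + t ^ 2 * D1 yv t
        - (η / 2) * (∑ i, 2 * D (bv i) t * D1 (bv i) t) + c0 * t)
      (2 * D1 yu t + t * D2 yu t + 2 * D yv t + 4 * t * D1 yv t + t ^ 2 * D2 yv t
        - (η / 2) * (∑ i, (2 * D1 (bv i) t * D1 (bv i) t + 2 * D (bv i) t * D2 (bv i) t))
        + c0) t := by
    intro t ht
    have k1 := (hDd yu t ht).fun_add ((hasDerivAt_id t).fun_mul (hD1d yu t ht))
    have k2 := ((hasDerivAt_id t).const_mul 2).fun_mul (hDd yv t ht)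
    have k3 := (hasDerivAt_pow 2 t).fun_mul (hD1d yv t ht)
    have k4 : HasDerivAt (fun y : ℝ => ∑ i, 2 * D (bv i) y * D1 (bv i) y)
        (∑ i, (2 * D1 (bv i) t * D1 (bv i) t + 2 * D (bv i) t * D2 (bv i) t)) t := by
      have h := HasDerivAt.fun_sum (fun (i : Fin m) (_ : i ∈ Finset.univ) =>
        ((hDd (bv i) t ht).const_mul 2).fun_mul (hD1d (bv i) t ht))
      exact h.congr_deriv (Finset.sum_congr rfl fun i _ => by push_cast; ring)
    have k5 := k4.const_mul (η / 2)
    have k6 := (hasDerivAt_id t).const_mul c0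
    have H := (((k1.fun_add k2).fun_add k3).fun_sub k5).fun_add k6
    refine H.congr_deriv ?_
    simp only [id_eq]
    push_cast
    ring
  -- third derivative
  have hL3 : ∀ t ∈ V, HasDerivAt
      (fun t : ℝ => 2 * D1 yu t + t * D2 yu t + 2 * D yv t + 4 * t * D1 yv t
        + t ^ 2 * D2 yv t
        - (η / 2) * (∑ i, (2 * D1 (bv i) t * D1 (bv i) t + 2 * D (bv i) t * D2 (bv i) t))
        + c0)
      (3 * D2 yu t + t * D3 yu t + 6 * D1 yv t + 6 * t * D2 yv t + t ^ 2 * D3 yv t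
        - (η / 2) * (∑ i, (6 * D1 (bv i) t * D2 (bv i) t + 2 * D (bv i) t * D3 (bv i) t))) t := by
    intro t ht
    have k1 := ((hD1d yu t ht).const_mul 2).fun_add ((hasDerivAt_id t).fun_mul (hD2d yu t ht))
    have k2 := (hDd yv t ht).const_mul 2
    have k3 := ((hasDerivAt_id t).const_mul 4).fun_mul (hD1d yv t ht)
    have k4 := (hasDerivAt_pow 2 t).fun_mul (hD2d yv t ht)
    have k5 : HasDerivAt
        (fun y : ℝ => ∑ i, (2 * D1 (bv i) y * D1 (bv i) y + 2 * D (bv i) y * D2 (bv i) y))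
        (∑ i, (6 * D1 (bv i) t * D2 (bv i) t + 2 * D (bv i) t * D3 (bv i) t)) t := by
      have h := HasDerivAt.fun_sum (fun (i : Fin m) (_ : i ∈ Finset.univ) =>
        ((((hD1d (bv i) t ht).const_mul 2).fun_mul (hD1d (bv i) t ht)).fun_add
          (((hDd (bv i) t ht).const_mul 2).fun_mul (hD2d (bv i) t ht))))
      exact h.congr_deriv (Finset.sum_congr rfl fun i _ => by push_cast; ring)
    have k6 := k5.const_mul (η / 2)
    have H := (((k1.fun_add k2).fun_add k3).fun_add k4).fun_sub k6
    have H2 := H.add_const c0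
    refine H2.congr_deriv ?_
    simp only [id_eq]
    push_cast
    ring
  -- propagate the vanishing through three derivatives
  have hE1 : (fun t : ℝ => D yu t + t * D1 yu t + 2 * t * D yv t + t ^ 2 * D1 yv t
      - (η / 2) * (∑ i, 2 * D (bv i) t * D1 (bv i) t) + c0 * t)
      =ᶠ[nhds (0 : ℝ)] (fun _ => (0 : ℝ)) := by
    filter_upwards [hL0.deriv, hVmem] with t h1 h2
    exact (hL1 t h2).deriv.symm.trans (h1.trans (by simp))
  have hE2 : (fun t : ℝ => 2 * D1 yu t + t * D2 yu t + 2 * D yv t + 4 * t * D1 yv t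
      + t ^ 2 * D2 yv t
      - (η / 2) * (∑ i, (2 * D1 (bv i) t * D1 (bv i) t + 2 * D (bv i) t * D2 (bv i) t))
      + c0)
      =ᶠ[nhds (0 : ℝ)] (fun _ => (0 : ℝ)) := by
    filter_upwards [hE1.deriv, hVmem] with t h1 h2
    exact (hL2 t h2).deriv.symm.trans (h1.trans (by simp))
  have hE3 : (fun t : ℝ => 3 * D2 yu t + t * D3 yu t + 6 * D1 yv t + 6 * t * D2 yv t
      + t ^ 2 * D3 yv t
      - (η / 2) * (∑ i, (6 * D1 (bv i) t * D2 (bv i) t + 2 * D (bv i) t * D3 (bv i) t)))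
      =ᶠ[nhds (0 : ℝ)] (fun _ => (0 : ℝ)) := by
    filter_upwards [hE2.deriv, hVmem] with t h1 h2
    exact (hL3 t h2).deriv.symm.trans (h1.trans (by simp))
  have hkey0 := hE3.eq_of_nhds
  simp only [hD0, mul_zero, zero_mul, add_zero, zero_add, mul_zero, zero_pow] at hkey0
  -- hkey0 : 3 * D2 yu 0 + 6 * D1 yv 0 - η/2 * ∑ i, 6 * D1 (bv i) 0 * D2 (bv i) 0 = 0
  have hkey : 3 * G3 0 x x yu + 6 * G2 0 x yv
      - (η / 2) * (∑ i, 6 * (G2 0 x (bv i)) * (G3 0 x x (bv i))) = 0 := by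
    have := hkey0
    simp only [hD1v, hD2v] at this
    convert this using 2 <;> norm_num
  -- symmetry of derivatives
  have hU_ev : ∀ z ∈ U, ∀ᶠ w in nhds z, HasFDerivAt E (G1 w) w := by
    intro z hz
    filter_upwards [hUopen.mem_nhds hz] with w hw
    exact hfd0 w hw
  have sym2z : ∀ z ∈ U, ∀ a b, G2 z a b = G2 z b a := fun z hz a b =>
    second_derivative_symmetric_of_eventually (hU_ev z hz) (hfd1 z hz) a b
  have sym2 : ∀ a b, G2 0 a b = G2 0 b a := sym2z 0 hU0
  have hU_ev1 : ∀ᶠ w in nhds (0 : EuclideanSpace ℝ (Fin n)), HasFDerivAt G1 (G2 w) w := by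
    filter_upwards [hUopen.mem_nhds hU0] with w hw
    exact hfd1 w hw
  have sym3_12 : ∀ a b : EuclideanSpace ℝ (Fin n), G3 0 a b = G3 0 b a := fun a b =>
    second_derivative_symmetric_of_eventually hU_ev1 (hfd2 0 hU0) a b
  have sym3_23 : ∀ a b c : EuclideanSpace ℝ (Fin n), G3 0 a b c = G3 0 a c b := by
    intro a b c
    letI i5 : NormedAddCommGroup (EuclideanSpace ℝ (Fin n) →L[ℝ] EuclideanSpace ℝ (Fin n) →L[ℝ] ℝ) :=
      inferInstance
    letI i6 : NormedSpace ℝ (EuclideanSpace ℝ (Fin n) →L[ℝ] EuclideanSpace ℝ (Fin n) →L[ℝ] ℝ) :=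
      inferInstance
    set Φ1 : (EuclideanSpace ℝ (Fin n) →L[ℝ] EuclideanSpace ℝ (Fin n) →L[ℝ] ℝ) →L[ℝ] ℝ :=
      (ContinuousLinearMap.apply ℝ ℝ c).comp
        (ContinuousLinearMap.apply ℝ (EuclideanSpace ℝ (Fin n) →L[ℝ] ℝ) b) with hΦ1
    set Φ2 : (EuclideanSpace ℝ (Fin n) →L[ℝ] EuclideanSpace ℝ (Fin n) →L[ℝ] ℝ) →L[ℝ] ℝ :=
      (ContinuousLinearMap.apply ℝ ℝ b).comp
        (ContinuousLinearMap.apply ℝ (EuclideanSpace ℝ (Fin n) →L[ℝ] ℝ) c) with hΦ2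
    have d1pre : HasFDerivAt (⇑Φ1 ∘ G2) (Φ1.comp (G3 0)) 0 :=
      HasFDerivAt.comp (g := ⇑Φ1) (f := G2) (0 : EuclideanSpace ℝ (Fin n)) Φ1.hasFDerivAt (hfd2 0 hU0)
    have d2pre : HasFDerivAt (⇑Φ2 ∘ G2) (Φ2.comp (G3 0)) 0 :=
      HasFDerivAt.comp (g := ⇑Φ2) (f := G2) (0 : EuclideanSpace ℝ (Fin n)) Φ2.hasFDerivAt (hfd2 0 hU0)
    have d1 : HasFDerivAt (fun z => G2 z b c) (Φ1.comp (G3 0)) 0 :=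
      d1pre.congr_of_eventuallyEq (Filter.Eventually.of_forall fun z => rfl)
    have d2 : HasFDerivAt (fun z => G2 z c b) (Φ2.comp (G3 0)) 0 :=
      d2pre.congr_of_eventuallyEq (Filter.Eventually.of_forall fun z => rfl)
    have heq : (fun z => G2 z b c) =ᶠ[nhds (0 : EuclideanSpace ℝ (Fin n))]
        (fun z => G2 z c b) := by
      filter_upwards [hUopen.mem_nhds hU0] with z hz
      exact sym2z z hz b c
    have d2' : HasFDerivAt (fun z => G2 z b c) (Φ2.comp (G3 0)) 0 :=
      d2.congr_of_eventuallyEq heq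
    have huni : Φ1.comp (G3 0) = Φ2.comp (G3 0) := d1.unique d2'
    have := congrArg (fun T : EuclideanSpace ℝ (Fin n) →L[ℝ] ℝ => T a) huni
    simpa [hΦ1, hΦ2] using this
  -- iterated derivatives at 0 in terms of G2, G3
  have hIT2 : ∀ a b : EuclideanSpace ℝ (Fin n),
      iteratedFDeriv ℝ 2 E 0 ![a, b] = G2 0 a b := by
    intro a b
    rw [iteratedFDeriv_two_apply]
    rfl
  have hIT3 : ∀ a b c : EuclideanSpace ℝ (Fin n),
      iteratedFDeriv ℝ 3 E 0 ![a, b, c] = G3 0 a b c := by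
    intro a b c
    have h1 : iteratedFDeriv ℝ 3 E 0 ![a, b, c]
        = iteratedFDeriv ℝ 2 (fun y => fderiv ℝ E y) 0 (Fin.init ![a, b, c])
            (![a, b, c] (Fin.last 2)) :=
      iteratedFDeriv_succ_apply_right ![a, b, c]
    rw [h1, iteratedFDeriv_two_apply]
    rfl
  -- components of W₂ x
  have hW2x : ∀ j, W₂.mulVec x j = G2 0 x (EuclideanSpace.single j 1) := by
    intro j
    have h1 : W₂.mulVec x j = ∑ k, W₂ j k * x k := rfl
    have h2 : ∀ k : Fin n, W₂ j k
        = G2 0 (EuclideanSpace.single j 1) (EuclideanSpace.single k 1) := fun k => by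
      rw [hW₂ j k, hIT2]
    rw [h1]
    calc ∑ k, W₂ j k * x k
        = ∑ k, x k * G2 0 (EuclideanSpace.single j 1) (EuclideanSpace.single k 1) :=
          Finset.sum_congr rfl fun k _ => by rw [h2 k]; ring
      _ = G2 0 (EuclideanSpace.single j 1) x := (clm_expand _ x).symm
      _ = G2 0 x (EuclideanSpace.single j 1) := sym2 _ _
  -- the inner product term
  have hinner : (⟪N x x, toEuc (W₂.mulVec x)⟫ : ℝ) = G2 0 x yv := by
    rw [PiLp.inner_apply]
    simp only [RCLike.inner_apply, starRingEnd_apply, star_trivial]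
    rw [clm_expand (G2 0 x) yv]
    refine Finset.sum_congr rfl fun j _ => ?_
    have : (toEuc (W₂.mulVec x)) j = W₂.mulVec x j := rfl
    rw [this, hW2x j, hyvdef]
    exact mul_comm _ _
  -- the B Bᵀ W₂ term
  have hq : ∀ i, Bᵀ.mulVec (W₂.mulVec x) i = G2 0 x (bv i) := by
    intro i
    have h1 : Bᵀ.mulVec (W₂.mulVec x) i = ∑ j, B j i * W₂.mulVec x j := by
      simp [Matrix.mulVec, dotProduct, Matrix.transpose_apply]
    rw [h1, clm_expand (G2 0 x) (bv i)]
    refine Finset.sum_congr rfl fun j _ => ?_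
    rw [hW2x j]
    have : (bv i) j = B j i := rfl
    rw [this]
  have hr : G3 0 x x (toEuc ((B * Bᵀ * W₂).mulVec x))
      = ∑ i, G2 0 x (bv i) * G3 0 x x (bv i) := by
    rw [clm_expand (G3 0 x x)]
    have hcomp : ∀ j, ((B * Bᵀ * W₂).mulVec x) j
        = ∑ i, B j i * (Bᵀ.mulVec (W₂.mulVec x)) i := by
      intro j
      rw [← Matrix.mulVec_mulVec, ← Matrix.mulVec_mulVec]
      rfl
    calc ∑ j, (toEuc ((B * Bᵀ * W₂).mulVec x)) j * G3 0 x x (EuclideanSpace.single j 1)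
        = ∑ j, ∑ i, (B j i * G2 0 x (bv i)) * G3 0 x x (EuclideanSpace.single j 1) := by
          refine Finset.sum_congr rfl fun j _ => ?_
          have : (toEuc ((B * Bᵀ * W₂).mulVec x)) j = ((B * Bᵀ * W₂).mulVec x) j := rfl
          rw [this, hcomp j, Finset.sum_mul]
          exact Finset.sum_congr rfl fun i _ => by rw [hq i]
      _ = ∑ i, ∑ j, (B j i * G2 0 x (bv i)) * G3 0 x x (EuclideanSpace.single j 1) :=
          Finset.sum_comm
      _ = ∑ i, G2 0 x (bv i) * G3 0 x x (bv i) := by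
          refine Finset.sum_congr rfl fun i _ => ?_
          rw [clm_expand (G3 0 x x) (bv i), Finset.mul_sum]
          refine Finset.sum_congr rfl fun j _ => ?_
          rw [show (bv i) j = B j i from rfl]
          ring
  -- the goal vector
  have hvec : toEuc ((A - η • (B * Bᵀ * W₂)).mulVec x)
      = yu - η • toEuc ((B * Bᵀ * W₂).mulVec x) := by
    show toEuc ((A - η • (B * Bᵀ * W₂)).mulVec x)
      = toEuc (A.mulVec x - η • (B * Bᵀ * W₂).mulVec x)
    rw [Matrix.sub_mulVec, Matrix.smul_mulVec]
  have hswap : ∀ a : EuclideanSpace ℝ (Fin n), G3 0 a x x = G3 0 x x a := by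
    intro a
    have h1 : G3 0 a x x = G3 0 x a x := by rw [sym3_12 a x]
    rw [h1, sym3_23]
  -- final computation
  rw [ContinuousMultilinearMap.smul_apply, hIT3, hvec]
  rw [_root_.map_sub, ContinuousLinearMap.sub_apply, ContinuousLinearMap.sub_apply]
  have hsm : G3 0 (η • toEuc ((B * Bᵀ * W₂).mulVec x)) x x
      = η * G3 0 (toEuc ((B * Bᵀ * W₂).mulVec x)) x x := by
    rw [_root_.map_smul, ContinuousLinearMap.smul_apply, ContinuousLinearMap.smul_apply]
    rfl
  rw [hsm, hswap, hswap, hr, hinner]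
  have hfac : ((Nat.factorial 3 : ℝ))⁻¹ = 6⁻¹ := by norm_num [Nat.factorial]
  rw [hfac]
  have hsum : (∑ i, 6 * (G2 0 x (bv i)) * (G3 0 x x (bv i)))
      = 6 * ∑ i, G2 0 x (bv i) * G3 0 x x (bv i) := by
    rw [Finset.mul_sum]
    exact Finset.sum_congr rfl fun i _ => by ring
  rw [hsum] at hkey
  set S := ∑ i, G2 0 x (bv i) * G3 0 x x (bv i)
  set a1 := G3 0 x x yu
  set a2 := G2 0 x yv
  -- hkey : 3 * a1 + 6 * a2 - η / 2 * (6 * S) = 0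
  -- goal : 3 * (6⁻¹ • (a1 - η * S)) + a2 = 0
  have : (6 : ℝ)⁻¹ • (a1 - η * S) = 6⁻¹ * (a1 - η * S) := rfl
  rw [this]
  linarith
end
end

section
/- Assume that the only real n×n matrix Z satisfying Aᵀ Z + Z A = 0 is Z = 0. If a real n×n matrix W satisfies 0 = Aᵀ W + W A + Cᵀ C − η · W̄ B Bᵀ W̄, where W̄ := (W + Wᵀ)/2 denotes the symmetric part of W, then W is symmetric (W = Wᵀ), and consequently W satisfies the H∞ algebraic Riccati equation Aᵀ W + W A + Cᵀ C − η · W B Bᵀ W = 0. -/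
open Matrix

noncomputable section

/-- The symmetry argument from the proof of Theorem 6: if `Z ↦ AᵀZ + ZA` only
vanishes at `Z = 0`, and `W` satisfies the Riccati-type equation in which the
quadratic term involves only the symmetric part `W̄ = (W + Wᵀ)/2`, then `W` is
symmetric and satisfies the standard H∞ algebraic Riccati equation. -/
theorem riccati_symmetric_part_forces_symmetry
    {n m p : ℕ}
    (A : Matrix (Fin n) (Fin n) ℝ) (B : Matrix (Fin n) (Fin m) ℝ)
    (C : Matrix (Fin p) (Fin n) ℝ) (η : ℝ)
    (hinj : ∀ Z : Matrix (Fin n) (Fin n) ℝ, Aᵀ * Z + Z * A = 0 → Z = 0)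
    (W : Matrix (Fin n) (Fin n) ℝ)
    (hW : (0 : Matrix (Fin n) (Fin n) ℝ) =
      Aᵀ * W + W * A + Cᵀ * C -
        η • (((2:ℝ)⁻¹ • (W + Wᵀ)) * B * Bᵀ * ((2:ℝ)⁻¹ • (W + Wᵀ)))) :
    W = Wᵀ ∧ Aᵀ * W + W * A + Cᵀ * C - η • (W * B * Bᵀ * W) = 0 := by
  set S : Matrix (Fin n) (Fin n) ℝ := (2:ℝ)⁻¹ • (W + Wᵀ) with hS
  have hSsymm : Sᵀ = S := by
    simp [hS, Matrix.transpose_smul, Matrix.transpose_add, add_comm]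
  have hQ : (η • (S * B * Bᵀ * S))ᵀ = η • (S * B * Bᵀ * S) := by
    simp only [Matrix.transpose_smul, Matrix.transpose_mul, hSsymm,
      Matrix.transpose_transpose, Matrix.mul_assoc]
  have h1 : Aᵀ * W + W * A + Cᵀ * C = η • (S * B * Bᵀ * S) :=
    sub_eq_zero.mp hW.symm
  have h2 : Aᵀ * Wᵀ + Wᵀ * A + Cᵀ * C = η • (S * B * Bᵀ * S) := by
    have := congrArg Matrix.transpose h1
    simpa [Matrix.transpose_add, Matrix.transpose_mul, hQ, add_comm,
      add_left_comm, add_assoc] using this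
  have hsym : W = Wᵀ := by
    have hz : Aᵀ * (W - Wᵀ) + (W - Wᵀ) * A = 0 := by
      have h3 := sub_eq_zero_of_eq (h1.trans h2.symm)
      rw [mul_sub, sub_mul]
      linear_combination (norm := abel) h3
    exact sub_eq_zero.mp (hinj _ hz)
  have hSW : S = W := by
    rw [hS, ← hsym, ← two_smul ℝ W, smul_smul]
    norm_num
  rw [hSW] at h1
  exact ⟨hsym, sub_eq_zero.mpr h1⟩
end
end
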